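/- For s > 2 and digits c_1,…,c_{n+1} ∈ {1,…,s-1}, the ratio of diameters d(Δ'_{c_1…c_{n+1}}) / d(Δ'_{c_1…c_n}) equals 1/s^{c_{n+1}}. -/

import Mathlib

open Finset

/-- The term of the series: `c n / s ^ (c 1 + ... + c (n+1))` (0-indexed). -/
noncomputable def sTerm (s : ℕ) (c : ℕ → ℕ) (n : ℕ) : ℝ :=
  (c n : ℝ) / (s : ℝ) ^ (∑ k ∈ Finset.range (n + 1), c k)

/-- `x = Σ_{k=1}^∞ c_k / s^{c_1+⋯+c_k}`. -/
noncomputable def sVal (s : ℕ) (c : ℕ → ℕ) : ℝ := ∑' n : ℕ, sTerm s c n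

/-- The sequence `(c_k)` has all terms in `{1, ..., s-1}`. -/
def sValid (s : ℕ) (c : ℕ → ℕ) : Prop := ∀ k, 1 ≤ c k ∧ c k ≤ s - 1

/-- The set `S_{(s,0)}`. -/
def Sset (s : ℕ) : Set ℝ := { x | ∃ c : ℕ → ℕ, sValid s c ∧ x = sVal s c }

/-- The cylinder `Δ'_{c_1 ... c_n}` of rank `n` with base the first `n` terms of `c`. -/
def cyl (s n : ℕ) (c : ℕ → ℕ) : Set ℝ :=
  { x | ∃ c' : ℕ → ℕ, sValid s c' ∧ (∀ k < n, c' k = c k) ∧ x = sVal s c' }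

/-- The cylinder `Δ'_{c_1 ... c_n p}`: prefix of length `n` from `c`, next digit `p`. -/
def cylExt (s n : ℕ) (c : ℕ → ℕ) (p : ℕ) : Set ℝ :=
  { x | ∃ c' : ℕ → ℕ, sValid s c' ∧ (∀ k < n, c' k = c k) ∧ c' n = p ∧ x = sVal s c' }

/-- `g_n = Σ_{k=1}^n c_k / s^{c_1+⋯+c_k}`. -/
noncomputable def gPart (s n : ℕ) (c : ℕ → ℕ) : ℝ := ∑ k ∈ Finset.range n, sTerm s c k

/-! ### Auxiliary lemmas -/

lemma sTerm_nonneg (s : ℕ) (c : ℕ → ℕ) (n : ℕ) : 0 ≤ sTerm s c n := by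
  unfold sTerm; positivity

lemma sTerm_le (s : ℕ) (hs : 2 < s) (c : ℕ → ℕ) (hc : sValid s c) (n : ℕ) :
    sTerm s c n ≤ ((s : ℝ) * (1 / s)) * (1 / s) ^ n := by
  have hs1 : (1 : ℝ) < s := by exact_mod_cast Nat.lt_of_lt_of_le (by norm_num) hs.le
  have hs0 : (0 : ℝ) < s := by linarith
  have hE : n + 1 ≤ ∑ k ∈ Finset.range (n + 1), c k := by
    calc n + 1 = ∑ _k ∈ Finset.range (n + 1), 1 := by simp
    _ ≤ ∑ k ∈ Finset.range (n + 1), c k :=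
      Finset.sum_le_sum fun k _ => (hc k).1
  have hpow : (s : ℝ) ^ (n + 1) ≤ (s : ℝ) ^ (∑ k ∈ Finset.range (n + 1), c k) :=
    pow_le_pow_right₀ hs1.le hE
  have hcn : (c n : ℝ) ≤ s := by
    have := (hc n).2
    have : c n ≤ s := le_trans this (Nat.sub_le s 1)
    exact_mod_cast this
  have h1 : sTerm s c n ≤ (c n : ℝ) / (s : ℝ) ^ (n + 1) := by
    unfold sTerm
    apply div_le_div_of_nonneg_left (by positivity) (by positivity) hpow
  calc sTerm s c n ≤ (c n : ℝ) / (s : ℝ) ^ (n + 1) := h1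
  _ ≤ (s : ℝ) / (s : ℝ) ^ (n + 1) :=
      div_le_div_of_nonneg_right hcn (by positivity)
  _ = ((s : ℝ) * (1 / s)) * (1 / s) ^ n := by
      rw [one_div, inv_pow]
      field_simp
      ring

lemma summable_sTerm (s : ℕ) (hs : 2 < s) (c : ℕ → ℕ) (hc : sValid s c) :
    Summable (sTerm s c) := by
  have hs1 : (1 : ℝ) < s := by exact_mod_cast Nat.lt_of_lt_of_le (by norm_num) hs.le
  have hr0 : (0 : ℝ) ≤ 1 / s := by positivity
  have hr1 : (1 : ℝ) / s < 1 := by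
    rw [div_lt_one (by linarith)]; linarith
  exact Summable.of_nonneg_of_le (sTerm_nonneg s c)
    (sTerm_le s hs c hc)
    (((summable_geometric_of_lt_one hr0 hr1).mul_left _))

lemma shift_valid (s n : ℕ) (c : ℕ → ℕ) (hc : sValid s c) :
    sValid s (fun m => c (n + m)) := fun k => hc (n + k)

lemma sVal_split (s : ℕ) (hs : 2 < s) (c : ℕ → ℕ) (hc : sValid s c) (n : ℕ) :
    sVal s c = gPart s n c +
      (1 / (s : ℝ) ^ (∑ k ∈ Finset.range n, c k)) * sVal s (fun m => c (n + m)) := by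
  have hsum := summable_sTerm s hs c hc
  have hs0 : (0 : ℝ) < s := by
    have : (0 : ℕ) < s := by omega
    exact_mod_cast this
  have key : ∀ m : ℕ, sTerm s c (m + n) =
      (1 / (s : ℝ) ^ (∑ k ∈ Finset.range n, c k)) * sTerm s (fun j => c (n + j)) m := by
    intro m
    rw [Nat.add_comm m n]
    unfold sTerm
    have hsplit : ∑ k ∈ Finset.range (n + m + 1), c k =
        (∑ k ∈ Finset.range n, c k) + ∑ j ∈ Finset.range (m + 1), c (n + j) := by
      rw [show n + m + 1 = n + (m + 1) by omega, Finset.sum_range_add]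
    rw [hsplit, pow_add]
    have h1 : ((s : ℝ) ^ (∑ k ∈ Finset.range n, c k)) ≠ 0 := by positivity
    have h2 : ((s : ℝ) ^ (∑ j ∈ Finset.range (m + 1), c (n + j))) ≠ 0 := by positivity
    field_simp
  calc sVal s c = ∑ k ∈ Finset.range n, sTerm s c k + ∑' m, sTerm s c (m + n) :=
        (hsum.sum_add_tsum_nat_add n).symm
  _ = gPart s n c +
      ∑' m, (1 / (s : ℝ) ^ (∑ k ∈ Finset.range n, c k)) * sTerm s (fun j => c (n + j)) m := by
      rw [gPart]
      congr 1
      exact tsum_congr key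
  _ = gPart s n c +
      (1 / (s : ℝ) ^ (∑ k ∈ Finset.range n, c k)) * sVal s (fun m => c (n + m)) := by
      rw [tsum_mul_left]; rfl

lemma gPart_congr (s n : ℕ) (c c' : ℕ → ℕ) (h : ∀ k < n, c' k = c k) :
    gPart s n c' = gPart s n c := by
  unfold gPart
  apply Finset.sum_congr rfl
  intro k hk
  rw [Finset.mem_range] at hk
  unfold sTerm
  rw [h k hk]
  congr 2
  apply Finset.sum_congr rfl
  intro j hj
  rw [Finset.mem_range] at hj
  exact h j (by omega)

lemma cyl_eq_image (s n : ℕ) (hs : 2 < s) (c : ℕ → ℕ)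
    (hc : ∀ k < n, 1 ≤ c k ∧ c k ≤ s - 1) :
    cyl s n c = (fun x => gPart s n c +
      (1 / (s : ℝ) ^ (∑ k ∈ Finset.range n, c k)) * x) '' Sset s := by
  ext x
  constructor
  · rintro ⟨c', hv, hagree, rfl⟩
    refine ⟨sVal s (fun m => c' (n + m)), ⟨_, shift_valid s n c' hv, rfl⟩, ?_⟩
    have := sVal_split s hs c' hv n
    have hsum_eq : (∑ k ∈ Finset.range n, c' k) = ∑ k ∈ Finset.range n, c k :=
      Finset.sum_congr rfl fun k hk => hagree k (Finset.mem_range.mp hk)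
    simp only
    rw [← gPart_congr s n c c' hagree, ← hsum_eq, ← this]
  · rintro ⟨y, ⟨b, hb, rfl⟩, rfl⟩
    set c' : ℕ → ℕ := fun k => if k < n then c k else b (k - n) with hc'
    have hv : sValid s c' := by
      intro k
      by_cases hk : k < n
      · simp only [hc', if_pos hk]; exact hc k hk
      · simp only [hc', if_neg hk]; exact hb (k - n)
    have hagree : ∀ k < n, c' k = c k := fun k hk => by simp [hc', if_pos hk]
    refine ⟨c', hv, hagree, ?_⟩
    have hshift : (fun m => c' (n + m)) = b := by
      funext m
      simp only [hc']
      rw [if_neg (by omega)]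
      congr 1
      omega
    have := sVal_split s hs c' hv n
    rw [this, gPart_congr s n c c' hagree, hshift,
      Finset.sum_congr rfl fun k hk => hagree k (Finset.mem_range.mp hk)]

lemma sVal_nonneg (s : ℕ) (c : ℕ → ℕ) : 0 ≤ sVal s c :=
  tsum_nonneg (sTerm_nonneg s c)

lemma Sset_nonempty (s : ℕ) (hs : 2 < s) : (Sset s).Nonempty :=
  ⟨sVal s (fun _ => 1), ⟨fun _ => 1, fun _ => ⟨le_refl 1, by show 1 ≤ s - 1; omega⟩, rfl⟩⟩

lemma Sset_bddBelow (s : ℕ) : BddBelow (Sset s) :=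
  ⟨0, by rintro x ⟨c, _, rfl⟩; exact sVal_nonneg s c⟩

lemma Sset_bddAbove (s : ℕ) (hs : 2 < s) : BddAbove (Sset s) := by
  have hs1 : (1 : ℝ) < s := by exact_mod_cast Nat.lt_of_lt_of_le (by norm_num) hs.le
  have hr0 : (0 : ℝ) ≤ 1 / s := by positivity
  have hr1 : (1 : ℝ) / s < 1 := by rw [div_lt_one (by linarith)]; linarith
  refine ⟨∑' m : ℕ, ((s : ℝ) * (1 / s)) * (1 / s) ^ m, ?_⟩
  rintro x ⟨c, hc, rfl⟩
  exact Summable.tsum_le_tsum (sTerm_le s hs c hc) (summable_sTerm s hs c hc)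
    ((summable_geometric_of_lt_one hr0 hr1).mul_left _)

lemma sVal_const (s : ℕ) (hs : 2 < s) (d : ℕ) (hd : 1 ≤ d) :
    sVal s (fun _ => d) = (d : ℝ) / ((s : ℝ) ^ d - 1) := by
  have hs1 : (1 : ℝ) < s := by exact_mod_cast Nat.lt_of_lt_of_le (by norm_num) hs.le
  have hsd : (1 : ℝ) < (s : ℝ) ^ d := one_lt_pow₀ hs1 (by omega)
  have hterm : ∀ k : ℕ, sTerm s (fun _ => d) k =
      ((d : ℝ) * (1 / (s : ℝ) ^ d)) * (1 / (s : ℝ) ^ d) ^ k := by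
    intro k
    unfold sTerm
    simp only [Finset.sum_const, Finset.card_range, smul_eq_mul]
    have h0 : ((s : ℝ) ^ d) ≠ 0 := by positivity
    rw [mul_comm (k + 1) d, pow_mul, one_div, inv_pow, mul_assoc, ← mul_inv,
      div_eq_mul_inv, ← pow_succ']
  have hr0 : (0 : ℝ) ≤ 1 / (s : ℝ) ^ d := by positivity
  have hr1 : (1 : ℝ) / (s : ℝ) ^ d < 1 := by
    rw [div_lt_one (by linarith)]; linarith
  unfold sVal
  rw [tsum_congr hterm, tsum_mul_left, tsum_geometric_of_lt_one hr0 hr1]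
  have h0 : ((s : ℝ) ^ d) ≠ 0 := by positivity
  have h1 : ((s : ℝ) ^ d) - 1 ≠ 0 := sub_ne_zero.mpr hsd.ne'
  rw [eq_div_iff h1]
  have h2 : (1 : ℝ) - 1 / (s : ℝ) ^ d ≠ 0 := by
    have : (1 : ℝ) / (s : ℝ) ^ d < 1 := hr1
    intro h; rw [sub_eq_zero] at h; exact absurd h.symm this.ne
  field_simp

lemma Sset_diam_pos (s : ℕ) (hs : 2 < s) : sInf (Sset s) < sSup (Sset s) := by
  have hs1 : (1 : ℝ) < s := by exact_mod_cast Nat.lt_of_lt_of_le (by norm_num) hs.le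
  have hsr : (3 : ℝ) ≤ s := by exact_mod_cast hs
  have h1 : sVal s (fun _ => 1) ∈ Sset s :=
    ⟨fun _ => 1, fun _ => ⟨le_refl 1, by show 1 ≤ s - 1; omega⟩, rfl⟩
  have h2 : sVal s (fun _ => 2) ∈ Sset s :=
    ⟨fun _ => 2, fun _ => ⟨by show 1 ≤ 2; omega, by show 2 ≤ s - 1; omega⟩, rfl⟩
  have e1 : sVal s (fun _ => 1) = 1 / ((s : ℝ) - 1) := by
    rw [sVal_const s hs 1 le_rfl]; norm_num
  have e2 : sVal s (fun _ => 2) = 2 / ((s : ℝ) ^ 2 - 1) := by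
    rw [sVal_const s hs 2 (by norm_num)]; norm_num
  have hlt : sVal s (fun _ => 2) < sVal s (fun _ => 1) := by
    rw [e1, e2]
    rw [div_lt_div_iff₀ (by nlinarith) (by nlinarith)]
    nlinarith
  calc sInf (Sset s) ≤ sVal s (fun _ => 2) := csInf_le (Sset_bddBelow s) h2
  _ < sVal s (fun _ => 1) := hlt
  _ ≤ sSup (Sset s) := le_csSup (Sset_bddAbove s hs) h1

lemma cyl_diam (s n : ℕ) (hs : 2 < s) (c : ℕ → ℕ)
    (hc : ∀ k < n, 1 ≤ c k ∧ c k ≤ s - 1) :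
    sSup (cyl s n c) - sInf (cyl s n c) =
      (1 / (s : ℝ) ^ (∑ k ∈ Finset.range n, c k)) * (sSup (Sset s) - sInf (Sset s)) := by
  have hs0 : (0 : ℝ) < s := by
    have : (0 : ℕ) < s := by omega
    exact_mod_cast this
  set r : ℝ := 1 / (s : ℝ) ^ (∑ k ∈ Finset.range n, c k) with hr
  have hrpos : 0 < r := by positivity
  set g : ℝ := gPart s n c with hg
  set f : ℝ → ℝ := fun x => g + r * x with hf
  have hmono : Monotone f := by
    intro a b hab
    simp only [hf]
    nlinarith
  have hcont : Continuous f := by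
    simp only [hf]
    exact continuous_const.add (continuous_const.mul continuous_id)
  have himg := cyl_eq_image s n hs c hc
  have hSup : sSup (cyl s n c) = f (sSup (Sset s)) := by
    rw [himg]
    exact (hmono.map_csSup_of_continuousAt hcont.continuousAt
      (Sset_nonempty s hs) (Sset_bddAbove s hs)).symm
  have hInf : sInf (cyl s n c) = f (sInf (Sset s)) := by
    rw [himg]
    exact (hmono.map_csInf_of_continuousAt hcont.continuousAt
      (Sset_nonempty s hs) (Sset_bddBelow s)).symm
  rw [hSup, hInf]
  simp only [hf]
  ring

theorem stmt6 (s n : ℕ) (hs : 2 < s) (c : ℕ → ℕ)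
    (hc : ∀ k < n + 1, 1 ≤ c k ∧ c k ≤ s - 1) :
    (sSup (cyl s (n + 1) c) - sInf (cyl s (n + 1) c)) /
        (sSup (cyl s n c) - sInf (cyl s n c)) = 1 / (s : ℝ) ^ (c n) := by
  have hs0 : (0 : ℝ) < s := by
    have : (0 : ℕ) < s := by omega
    exact_mod_cast this
  have hD : 0 < sSup (Sset s) - sInf (Sset s) := sub_pos.mpr (Sset_diam_pos s hs)
  have h1 := cyl_diam s (n + 1) hs c hc
  have h2 := cyl_diam s n hs c (fun k hk => hc k (by omega))
  rw [h1, h2, Finset.sum_range_succ, pow_add]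
  have hq : ((s : ℝ) ^ (∑ k ∈ Finset.range n, c k)) ≠ 0 := by positivity
  have hcn : ((s : ℝ) ^ (c n)) ≠ 0 := by positivity
  field_simp
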